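/- Let M ∈ {0,1}^{15×6} be the edge-matching incidence matrix of the Petersen graph. If y ∈ ℤ^6_{≥0} satisfies My ≤ (1,…,1) componentwise, then at most one coordinate of y is nonzero and each nonzero coordinate equals 1. -/

import Mathlib

set_option maxRecDepth 10000


/-- The Petersen graph, presented as the Kneser graph `K(5,2)`: vertices are the
2-element subsets of `Fin 5`, adjacent iff disjoint. -/
def Petersen : SimpleGraph {s : Finset (Fin 5) // s.card = 2} where
  Adj a b := Disjoint a.1 b.1
  symm := ⟨fun a b h => h.symm⟩
  loopless := ⟨fun a h => by
    have h := Finset.disjoint_self_iff_empty _ |>.mp h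
    have h2 := a.2
    rw [h] at h2
    simp at h2⟩

instance Petersen.decAdj : DecidableRel Petersen.Adj := fun a b => by
  unfold Petersen; infer_instance

abbrev PV := {s : Finset (Fin 5) // s.card = 2}

def ped (a b c d : Fin 5) (h1 : ({a,b} : Finset (Fin 5)).card = 2 := by decide)
    (h2 : ({c,d} : Finset (Fin 5)).card = 2 := by decide) : Sym2 PV :=
  s(⟨{a,b}, h1⟩, ⟨{c,d}, h2⟩)

def pedges : List (Sym2 PV) :=
  [ped 0 1 2 3, ped 0 1 2 4, ped 0 1 3 4, ped 0 2 1 3, ped 0 2 1 4, ped 0 2 3 4,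
   ped 0 3 1 2, ped 0 3 1 4, ped 0 3 2 4, ped 0 4 1 2, ped 0 4 1 3, ped 0 4 2 3,
   ped 1 2 3 4, ped 1 3 2 4, ped 1 4 2 3]

def pchoose : Nat → List α → List (List α)
  | 0, _ => [[]]
  | _+1, [] => []
  | n+1, x :: xs => ((pchoose n xs).map (x :: ·)) ++ pchoose (n+1) xs

def coverB (s : List (Sym2 PV)) : Bool := decide (∀ v : PV, ∃ e ∈ s, v ∈ e)

def pvalids : List (List (Sym2 PV)) := (pchoose 5 pedges).filter coverB

theorem pkey : ∀ s ∈ pvalids, ∀ t ∈ pvalids, ∃ e ∈ s, e ∈ t := by decide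

theorem pedges_nodup : pedges.Nodup := by decide

theorem mem_pedges : ∀ a b : PV, Petersen.Adj a b → s(a,b) ∈ pedges := by decide

theorem pcard_univ : (Finset.univ : Finset PV).card = 10 := by decide

theorem mem_pchoose {l' l : List α} (h : List.Sublist l' l) : l' ∈ pchoose l'.length l := by
  induction h with
  | slnil => exact List.mem_singleton_self _
  | @cons l₁ l₂ a h ih =>
      cases l₁ with
      | nil => exact List.mem_singleton_self _
      | cons b bs =>
          simp only [pchoose, List.length_cons, List.mem_append, List.mem_map]
          exact Or.inr ih
  | @cons_cons l₁ l₂ a h ih =>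
      simp only [pchoose, List.length_cons, List.mem_append, List.mem_map]
      exact Or.inl ⟨_, ih, rfl⟩

open scoped Classical

theorem edge_mem_pedges {e : Sym2 PV} (he : e ∈ Petersen.edgeSet) : e ∈ pedges := by
  induction e with
  | _ a b => exact mem_pedges a b ((SimpleGraph.mem_edgeSet Petersen).mp he)

theorem mem_toEdge {M : Petersen.Subgraph} (h : M.IsMatching) (v : M.verts) :
    (v : PV) ∈ (h.toEdge v : Sym2 PV) := by
  simp [SimpleGraph.Subgraph.IsMatching.toEdge]

/-- the matched-edge list of a perfect matching -/
noncomputable def mList (M : Petersen.Subgraph) : List (Sym2 PV) :=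
  pedges.filter (fun e => decide (e ∈ M.edgeSet))

theorem mList_card {M : Petersen.Subgraph} (hM : M.IsPerfectMatching) :
    (mList M).length = 5 := by
  classical
  set f : PV → Sym2 PV := fun v => (hM.1.toEdge ⟨v, hM.2 v⟩ : Sym2 PV) with hf
  set sF : Finset (Sym2 PV) := Finset.univ.filter (· ∈ M.edgeSet) with hsF
  have hfib : ∀ e ∈ sF, (Finset.univ.filter (fun v => f v = e)).card = 2 := by
    intro e he
    rw [hsF, Finset.mem_filter] at he
    induction e with
    | _ a b =>
      have hab : M.Adj a b := SimpleGraph.Subgraph.mem_edgeSet.mp he.2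
      have hne : a ≠ b := hab.adj_sub.ne
      have : Finset.univ.filter (fun v => f v = s(a,b)) = {a, b} := by
        ext v
        simp only [Finset.mem_filter, Finset.mem_univ, true_and, Finset.mem_insert,
          Finset.mem_singleton]
        constructor
        · intro hv
          have := mem_toEdge hM.1 ⟨v, hM.2 v⟩
          rw [show (hM.1.toEdge ⟨v, hM.2 v⟩ : Sym2 PV) = f v from rfl, hv] at this
          simpa [Sym2.mem_iff] using this
        · rintro (rfl | rfl)
          · have := hM.1.toEdge_eq_of_adj hab
            simp only [hf]
            exact congrArg Subtype.val this
          · have := hM.1.toEdge_eq_of_adj hab.symm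
            simp only [hf]
            exact (congrArg Subtype.val this).trans Sym2.eq_swap
      rw [this, Finset.card_insert_of_notMem (by simpa using hne), Finset.card_singleton]
  have hmem : ∀ v ∈ (Finset.univ : Finset PV), f v ∈ sF := by
    intro v _
    rw [hsF, Finset.mem_filter]
    exact ⟨Finset.mem_univ _, (hM.1.toEdge ⟨v, hM.2 v⟩).2⟩
  have hcount := Finset.card_eq_sum_card_fiberwise hmem
  rw [pcard_univ, Finset.sum_congr rfl hfib, Finset.sum_const, smul_eq_mul] at hcount
  have hcard : sF.card = 5 := by omega
  have hnd : (mList M).Nodup := pedges_nodup.filter _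
  have htf : (mList M).toFinset = sF := by
    ext e
    simp only [mList, List.mem_toFinset, List.mem_filter, decide_eq_true_eq, hsF,
      Finset.mem_filter, Finset.mem_univ, true_and]
    constructor
    · exact fun h => h.2
    · intro h
      exact ⟨edge_mem_pedges (M.edgeSet_subset h), h⟩
  have := List.toFinset_card_of_nodup hnd
  rw [htf, hcard] at this
  omega

theorem mList_mem_pvalids {M : Petersen.Subgraph} (hM : M.IsPerfectMatching) :
    mList M ∈ pvalids := by
  rw [pvalids, List.mem_filter]
  constructor
  · have h5 := mList_card hM
    have := mem_pchoose (List.filter_sublist (l := pedges) (p := fun e => decide (e ∈ M.edgeSet)))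
    rwa [show (pedges.filter fun e => decide (e ∈ M.edgeSet)) = mList M from rfl, h5] at this
  · rw [coverB, decide_eq_true_eq]
    intro v
    obtain ⟨w, hw, -⟩ := hM.1 (hM.2 v)
    refine ⟨s(v, w), ?_, Sym2.mem_mk_left _ _⟩
    rw [mList, List.mem_filter]
    exact ⟨edge_mem_pedges (M.edgeSet_subset hw), by simp [SimpleGraph.Subgraph.mem_edgeSet, hw]⟩

theorem shared_edge (M N : Petersen.Subgraph) (hM : M.IsPerfectMatching)
    (hN : N.IsPerfectMatching) : ∃ e, e ∈ M.edgeSet ∧ e ∈ N.edgeSet := by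
  obtain ⟨e, heM, heN⟩ := pkey _ (mList_mem_pvalids hM) _ (mList_mem_pvalids hN)
  rw [mList, List.mem_filter, decide_eq_true_eq] at heM heN
  exact ⟨e, heM.2, heN.2⟩

/-- The edge/perfect-matching incidence matrix of the Petersen graph, with rows
indexed by the 15 edges and columns by the 6 perfect matchings, over `ℤ`. -/
noncomputable def incMatZ (eE : Fin 15 ≃ Petersen.edgeSet)
    (eM : Fin 6 ≃ {M : Petersen.Subgraph // M.IsPerfectMatching}) :
    Matrix (Fin 15) (Fin 6) ℤ :=
  fun i j => if (eE i : Sym2 _) ∈ (eM j).1.edgeSet then 1 else 0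

/-- If `y ∈ ℤ^6` is nonnegative and `My ≤ (1,…,1)` componentwise, then at most
one coordinate of `y` is nonzero, and each nonzero coordinate equals `1`. -/
theorem stmt10 (eE : Fin 15 ≃ Petersen.edgeSet)
    (eM : Fin 6 ≃ {M : Petersen.Subgraph // M.IsPerfectMatching})
    (y : Fin 6 → ℤ) (hy : ∀ j, 0 ≤ y j)
    (hle : ∀ i, (incMatZ eE eM).mulVec y i ≤ 1) :
    (∀ j k, y j ≠ 0 → y k ≠ 0 → j = k) ∧ (∀ j, y j ≠ 0 → y j = 1) := by
  have key : ∀ j k : Fin 6, ∃ i : Fin 15, incMatZ eE eM i j = 1 ∧ incMatZ eE eM i k = 1 := by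
    intro j k
    obtain ⟨e, heM, heN⟩ := shared_edge (eM j).1 (eM k).1 (eM j).2 (eM k).2
    have heP : e ∈ Petersen.edgeSet := (eM j).1.edgeSet_subset heM
    refine ⟨eE.symm ⟨e, heP⟩, ?_, ?_⟩ <;>
      simp [incMatZ, Equiv.apply_symm_apply, heM, heN]
  have hnn : ∀ (i : Fin 15) (l : Fin 6), 0 ≤ incMatZ eE eM i l := by
    intro i l
    unfold incMatZ
    split <;> norm_num
  have hsum : ∀ i, ∑ l, incMatZ eE eM i l * y l ≤ 1 := by
    intro i
    simpa [Matrix.mulVec, dotProduct] using hle i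
  have main : ∀ j k : Fin 6, j ≠ k → y j + y k ≤ 1 := by
    intro j k hjk
    obtain ⟨i, h1, h2⟩ := key j k
    have hle2 : ∑ l ∈ ({j, k} : Finset (Fin 6)), incMatZ eE eM i l * y l ≤
        ∑ l, incMatZ eE eM i l * y l :=
      Finset.sum_le_sum_of_subset_of_nonneg (Finset.subset_univ _)
        (fun l _ _ => mul_nonneg (hnn i l) (hy l))
    rw [Finset.sum_pair hjk, h1, h2, one_mul, one_mul] at hle2
    exact hle2.trans (hsum i)
  have single : ∀ j : Fin 6, y j ≤ 1 := by
    intro j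
    obtain ⟨i, h1, -⟩ := key j j
    have hle2 : ∑ l ∈ ({j} : Finset (Fin 6)), incMatZ eE eM i l * y l ≤
        ∑ l, incMatZ eE eM i l * y l :=
      Finset.sum_le_sum_of_subset_of_nonneg (Finset.subset_univ _)
        (fun l _ _ => mul_nonneg (hnn i l) (hy l))
    rw [Finset.sum_singleton, h1, one_mul] at hle2
    exact hle2.trans (hsum i)
  constructor
  · intro j k hj hk
    by_contra hne
    have h1 := main j k hne
    have h2 := hy j
    have h3 := hy k
    omega
  · intro j hj
    have h1 := single j
    have h2 := hy j
    omega
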